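/- arXiv:hep-th/0601172 — 2 statements merged into one kernel-verified Lean document; each statement's English description precedes it below -/
import Mathlib

section
/- The Riemannian (pseudo-Riemannian) metric on ℝ³ given by ds² = 2v·e^{-y₁}dy₁dy₃ + q·e^{-2y₁}dy₂² (q,v nonzero constants) is flat: its Riemann curvature tensor vanishes identically. -/
open Real Matrix

noncomputable section

/-- Partial derivative of a scalar function on ℝ³ in the i-th coordinate direction. -/
def pd (i : Fin 3) (f : (Fin 3 → ℝ) → ℝ) (y : Fin 3 → ℝ) : ℝ :=
  fderiv ℝ f y (Pi.single i 1)

/-- Christoffel symbols Γ^k_{ij} of the Levi-Civita connection of the metric g. -/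
def christoffel (g : (Fin 3 → ℝ) → Matrix (Fin 3) (Fin 3) ℝ) (k i j : Fin 3)
    (y : Fin 3 → ℝ) : ℝ :=
  (1/2) * ∑ l, (g y)⁻¹ k l *
    (pd i (fun z => g z l j) y + pd j (fun z => g z l i) y - pd l (fun z => g z i j) y)

/-- Riemann curvature tensor R^l_{kij}. -/
def riemann (g : (Fin 3 → ℝ) → Matrix (Fin 3) (Fin 3) ℝ) (l k i j : Fin 3)
    (y : Fin 3 → ℝ) : ℝ :=
  pd i (christoffel g l j k) y - pd j (christoffel g l i k) y
  + ∑ m, (christoffel g l i m y * christoffel g m j k y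
        - christoffel g l j m y * christoffel g m i k y)

/-- Ricci tensor R_{ij} = R^k_{ikj}. -/
def ricci (g : (Fin 3 → ℝ) → Matrix (Fin 3) (Fin 3) ℝ) (i j : Fin 3)
    (y : Fin 3 → ℝ) : ℝ :=
  ∑ k, riemann g k i k j y

/-- Scalar (Gauss) curvature R = g^{ij} R_{ij}. -/
def scalarCurv (g : (Fin 3 → ℝ) → Matrix (Fin 3) (Fin 3) ℝ) (y : Fin 3 → ℝ) : ℝ :=
  ∑ i, ∑ j, (g y)⁻¹ i j * ricci g i j y

/-- Covariant Hessian ∇ᵢ∇ⱼΦ = ∂ᵢ∂ⱼΦ - Γ^k_{ij} ∂ₖΦ. -/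
def covHess (g : (Fin 3 → ℝ) → Matrix (Fin 3) (Fin 3) ℝ) (Φ : (Fin 3 → ℝ) → ℝ)
    (i j : Fin 3) (y : Fin 3 → ℝ) : ℝ :=
  pd i (pd j Φ) y - ∑ k, christoffel g k i j y * pd k Φ y

/-- The (5|1) flat metric. -/
def G51 (q v : ℝ) (y : Fin 3 → ℝ) : Matrix (Fin 3) (Fin 3) ℝ :=
  !![0, 0, v * exp (-(y 0));
     0, q * exp (-2 * y 0), 0;
     v * exp (-(y 0)), 0, 0]

lemma pd_const (c : ℝ) (i : Fin 3) (y : Fin 3 → ℝ) : pd i (fun _ => c) y = 0 := by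
  simp [pd]

lemma pd_cexp (c a : ℝ) (i : Fin 3) (y : Fin 3 → ℝ) :
    pd i (fun z => c * Real.exp (a * z 0)) y
      = (if i = 0 then c * (a * Real.exp (a * y 0)) else 0) := by
  have h1 : HasFDerivAt (fun z : Fin 3 → ℝ => z 0)
      (ContinuousLinearMap.proj 0 : (Fin 3 → ℝ) →L[ℝ] ℝ) y :=
    (ContinuousLinearMap.proj (R := ℝ) (φ := fun _ : Fin 3 => ℝ) 0).hasFDerivAt
  have h2 : HasDerivAt (fun t : ℝ => c * Real.exp (a * t))
      (c * (a * Real.exp (a * y 0))) (y 0) := by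
    have := ((hasDerivAt_id (y 0)).const_mul a).exp.const_mul c
    simpa [mul_comm, mul_assoc, mul_left_comm] using this
  have h := h2.comp_hasFDerivAt y h1
  have h' : HasFDerivAt (fun z : Fin 3 → ℝ => c * Real.exp (a * z 0))
      ((c * (a * Real.exp (a * y 0))) • (ContinuousLinearMap.proj 0 : (Fin 3 → ℝ) →L[ℝ] ℝ)) y := h
  rw [pd, h'.fderiv]
  by_cases hi : i = 0 <;> simp [hi, Pi.single_apply]

lemma G51_inv (q v : ℝ) (hq : q ≠ 0) (hv : v ≠ 0) (y : Fin 3 → ℝ) :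
    (G51 q v y)⁻¹ = !![0, 0, exp (y 0) / v;
                       0, exp (2 * y 0) / q, 0;
                       exp (y 0) / v, 0, 0] := by
  apply Matrix.inv_eq_right_inv
  ext i j
  fin_cases i <;> fin_cases j <;>
    simp [G51, Matrix.mul_apply, Fin.sum_univ_three, vecHead, vecTail] <;>
    field_simp <;> ring_nf <;>
    (try rw [mul_assoc]) <;> rw [← Real.exp_add] <;> ring_nf <;> simp

lemma pd_ve (c : ℝ) (i : Fin 3) (y : Fin 3 → ℝ) :
    pd i (fun z => c * Real.exp (-(z 0))) y
      = (if i = 0 then -(c * Real.exp (-(y 0))) else 0) := by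
  have := pd_cexp c (-1) i y
  simp only [neg_one_mul] at this
  rw [this]; split <;> ring

lemma pd_2e (c : ℝ) (i : Fin 3) (y : Fin 3 → ℝ) :
    pd i (fun z => c * Real.exp (-2 * z 0)) y
      = (if i = 0 then -2 * (c * Real.exp (-2 * y 0)) else 0) := by
  have := pd_cexp c (-2) i y
  rw [this]; split <;> ring

lemma G51e00 (q v : ℝ) : (fun z => G51 q v z 0 0) = (fun _ => (0:ℝ)) := by
  funext z; simp [G51, Matrix.vecHead, Matrix.vecTail]
lemma G51e01 (q v : ℝ) : (fun z => G51 q v z 0 1) = (fun _ => (0:ℝ)) := by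
  funext z; simp [G51, Matrix.vecHead, Matrix.vecTail]
lemma G51e02 (q v : ℝ) : (fun z => G51 q v z 0 2) = (fun z => v * Real.exp (-(z 0))) := by
  funext z; simp [G51, Matrix.vecHead, Matrix.vecTail]
lemma G51e10 (q v : ℝ) : (fun z => G51 q v z 1 0) = (fun _ => (0:ℝ)) := by
  funext z; simp [G51, Matrix.vecHead, Matrix.vecTail]
lemma G51e11 (q v : ℝ) : (fun z => G51 q v z 1 1) = (fun z => q * Real.exp (-2 * z 0)) := by
  funext z; simp [G51, Matrix.vecHead, Matrix.vecTail]
lemma G51e12 (q v : ℝ) : (fun z => G51 q v z 1 2) = (fun _ => (0:ℝ)) := by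
  funext z; simp [G51, Matrix.vecHead, Matrix.vecTail]
lemma G51e20 (q v : ℝ) : (fun z => G51 q v z 2 0) = (fun z => v * Real.exp (-(z 0))) := by
  funext z; simp [G51, Matrix.vecHead, Matrix.vecTail]
lemma G51e21 (q v : ℝ) : (fun z => G51 q v z 2 1) = (fun _ => (0:ℝ)) := by
  funext z; simp [G51, Matrix.vecHead, Matrix.vecTail]
lemma G51e22 (q v : ℝ) : (fun z => G51 q v z 2 2) = (fun _ => (0:ℝ)) := by
  funext z; simp [G51, Matrix.vecHead, Matrix.vecTail]

lemma fin3mk0 (h : 0 < 3) : (⟨0, h⟩ : Fin 3) = 0 := rfl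
lemma fin3mk1 (h : 1 < 3) : (⟨1, h⟩ : Fin 3) = 1 := rfl
lemma fin3mk2 (h : 2 < 3) : (⟨2, h⟩ : Fin 3) = 2 := rfl

set_option maxHeartbeats 2000000 in
def Γf (q v : ℝ) : Fin 3 → Fin 3 → Fin 3 → (Fin 3 → ℝ) → ℝ
  | 0, 0, 0, _ => -1
  | 1, 0, 1, _ => -1
  | 1, 1, 0, _ => -1
  | 2, 1, 1, y => q / v * Real.exp (-(y 0))
  | _, _, _, _ => 0

lemma christoffel_G51 (q v : ℝ) (hq : q ≠ 0) (hv : v ≠ 0) (k i j : Fin 3) :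
    christoffel (G51 q v) k i j = Γf q v k i j := by
  funext y
  rw [christoffel]
  fin_cases k <;> fin_cases i <;> fin_cases j <;>
    (simp only [fin3mk0, fin3mk1, fin3mk2, G51_inv q v hq hv, Fin.sum_univ_three, Fin.isValue,
      G51e00 q v, G51e01 q v, G51e02 q v, G51e10 q v, G51e11 q v, G51e12 q v,
      G51e20 q v, G51e21 q v, G51e22 q v, pd_const, pd_ve, pd_2e];
     norm_num [Γf, Matrix.cons_val_zero, Matrix.cons_val_one, Matrix.head_cons,
       Matrix.vecHead, Matrix.vecTail, Fin.ext_iff, Matrix.cons_val_two]) <;>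
    (try simp only [Real.exp_neg]) <;> (try field_simp) <;> (try ring) <;>
    (try rw [sq, ← Real.exp_add]) <;> (try ring_nf)

lemma Γf000 (q v : ℝ) : Γf q v 0 0 0 = (fun _ => (-1:ℝ)) := rfl
lemma Γf001 (q v : ℝ) : Γf q v 0 0 1 = (fun _ => (0:ℝ)) := rfl
lemma Γf002 (q v : ℝ) : Γf q v 0 0 2 = (fun _ => (0:ℝ)) := rfl
lemma Γf010 (q v : ℝ) : Γf q v 0 1 0 = (fun _ => (0:ℝ)) := rfl
lemma Γf011 (q v : ℝ) : Γf q v 0 1 1 = (fun _ => (0:ℝ)) := rfl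
lemma Γf012 (q v : ℝ) : Γf q v 0 1 2 = (fun _ => (0:ℝ)) := rfl
lemma Γf020 (q v : ℝ) : Γf q v 0 2 0 = (fun _ => (0:ℝ)) := rfl
lemma Γf021 (q v : ℝ) : Γf q v 0 2 1 = (fun _ => (0:ℝ)) := rfl
lemma Γf022 (q v : ℝ) : Γf q v 0 2 2 = (fun _ => (0:ℝ)) := rfl
lemma Γf100 (q v : ℝ) : Γf q v 1 0 0 = (fun _ => (0:ℝ)) := rfl
lemma Γf101 (q v : ℝ) : Γf q v 1 0 1 = (fun _ => (-1:ℝ)) := rfl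
lemma Γf102 (q v : ℝ) : Γf q v 1 0 2 = (fun _ => (0:ℝ)) := rfl
lemma Γf110 (q v : ℝ) : Γf q v 1 1 0 = (fun _ => (-1:ℝ)) := rfl
lemma Γf111 (q v : ℝ) : Γf q v 1 1 1 = (fun _ => (0:ℝ)) := rfl
lemma Γf112 (q v : ℝ) : Γf q v 1 1 2 = (fun _ => (0:ℝ)) := rfl
lemma Γf120 (q v : ℝ) : Γf q v 1 2 0 = (fun _ => (0:ℝ)) := rfl
lemma Γf121 (q v : ℝ) : Γf q v 1 2 1 = (fun _ => (0:ℝ)) := rfl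
lemma Γf122 (q v : ℝ) : Γf q v 1 2 2 = (fun _ => (0:ℝ)) := rfl
lemma Γf200 (q v : ℝ) : Γf q v 2 0 0 = (fun _ => (0:ℝ)) := rfl
lemma Γf201 (q v : ℝ) : Γf q v 2 0 1 = (fun _ => (0:ℝ)) := rfl
lemma Γf202 (q v : ℝ) : Γf q v 2 0 2 = (fun _ => (0:ℝ)) := rfl
lemma Γf210 (q v : ℝ) : Γf q v 2 1 0 = (fun _ => (0:ℝ)) := rfl
lemma Γf211 (q v : ℝ) : Γf q v 2 1 1 = (fun y => q / v * Real.exp (-(y 0))) := rfl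
lemma Γf212 (q v : ℝ) : Γf q v 2 1 2 = (fun _ => (0:ℝ)) := rfl
lemma Γf220 (q v : ℝ) : Γf q v 2 2 0 = (fun _ => (0:ℝ)) := rfl
lemma Γf221 (q v : ℝ) : Γf q v 2 2 1 = (fun _ => (0:ℝ)) := rfl
lemma Γf222 (q v : ℝ) : Γf q v 2 2 2 = (fun _ => (0:ℝ)) := rfl

set_option maxHeartbeats 2000000 in
lemma pdG (q v : ℝ) (k i j i' : Fin 3) (y : Fin 3 → ℝ) :
    pd i' (Γf q v k i j) y
      = if k = 2 ∧ i = 1 ∧ j = 1 ∧ i' = 0 then -(q / v * Real.exp (-(y 0))) else 0 := by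
  fin_cases k <;> fin_cases i <;> fin_cases j <;>
    simp [fin3mk0, fin3mk1, fin3mk2, Γf000 q v, Γf001 q v, Γf002 q v, Γf010 q v, Γf011 q v, Γf012 q v, Γf020 q v, Γf021 q v, Γf022 q v, Γf100 q v, Γf101 q v, Γf102 q v, Γf110 q v, Γf111 q v, Γf112 q v, Γf120 q v, Γf121 q v, Γf122 q v, Γf200 q v, Γf201 q v, Γf202 q v, Γf210 q v, Γf211 q v, Γf212 q v, Γf220 q v, Γf221 q v, Γf222 q v, pd_const, pd_ve]

set_option maxHeartbeats 2000000 in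
lemma Γf_apply (q v : ℝ) (k i j : Fin 3) (y : Fin 3 → ℝ) :
    Γf q v k i j y
      = (if k = 0 ∧ i = 0 ∧ j = 0 then -1 else 0)
      + (if k = 1 ∧ i = 0 ∧ j = 1 then -1 else 0)
      + (if k = 1 ∧ i = 1 ∧ j = 0 then -1 else 0)
      + (if k = 2 ∧ i = 1 ∧ j = 1 then q / v * Real.exp (-(y 0)) else 0) := by
  fin_cases k <;> fin_cases i <;> fin_cases j <;>
    simp [fin3mk0, fin3mk1, fin3mk2, Γf000 q v, Γf001 q v, Γf002 q v, Γf010 q v, Γf011 q v, Γf012 q v, Γf020 q v, Γf021 q v, Γf022 q v, Γf100 q v, Γf101 q v, Γf102 q v, Γf110 q v, Γf111 q v, Γf112 q v, Γf120 q v, Γf121 q v, Γf122 q v, Γf200 q v, Γf201 q v, Γf202 q v, Γf210 q v, Γf211 q v, Γf212 q v, Γf220 q v, Γf221 q v, Γf222 q v]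

set_option maxHeartbeats 4000000 in
set_option maxHeartbeats 4000000 in
theorem stmt_1 (q v : ℝ) (hq : q ≠ 0) (hv : v ≠ 0) :
    ∀ (l k i j : Fin 3) (y : Fin 3 → ℝ), riemann (G51 q v) l k i j y = 0 := by
  intro l k i j y
  simp only [riemann, christoffel_G51 q v hq hv, Fin.sum_univ_three, pdG, Γf_apply]
  fin_cases l <;> fin_cases k <;> fin_cases i <;> fin_cases j <;>
    norm_num [fin3mk0, fin3mk1, fin3mk2,
      show (2:Fin 3) ≠ 1 from by decide, show (2:Fin 3) ≠ 0 from by decide,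
      show (0:Fin 3) ≠ 2 from by decide, show (1:Fin 3) ≠ 2 from by decide,
      show (0:Fin 3) ≠ 1 from by decide, show (1:Fin 3) ≠ 0 from by decide] <;> ring_nf
end
end

section
/- The coordinate change ξ₁=-e^{-y₁}, ξ₂=e^{-y₁}y₂, ξ₃=(q/(2v))e^{-y₁}y₂²+y₃ transforms the metric G₁₃=G₃₁=v e^{-y₁}, G₂₂=q e^{-2y₁} (other entries zero) into the constant metric with components G'₁₃=G'₃₁=v, G'₂₂=q, other entries zero; i.e., the pullback of the constant form under ξ equals G, equivalently (Dξ)ᵗ G' (Dξ) = G at every point. -/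
open Real Matrix

noncomputable section

/-- Flat coordinates for the (5|1) metric. -/
def xi51 (q v : ℝ) (y : Fin 3 → ℝ) : Fin 3 → ℝ :=
  ![-exp (-(y 0)), exp (-(y 0)) * y 1, q / (2 * v) * exp (-(y 0)) * (y 1) ^ 2 + y 2]


/-- Jacobian matrix of a map ℝ³ → ℝ³. -/
def jacobian (ξ : (Fin 3 → ℝ) → Fin 3 → ℝ) (y : Fin 3 → ℝ) : Matrix (Fin 3) (Fin 3) ℝ :=
  Matrix.of fun i j => pd j (fun z => ξ z i) y


/-- The constant metric G′. -/
def Gconst (q v : ℝ) : Matrix (Fin 3) (Fin 3) ℝ :=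
  !![0, 0, v; 0, q, 0; v, 0, 0]

lemma hproj (i : Fin 3) (y : Fin 3 → ℝ) :
    HasFDerivAt (fun z : Fin 3 → ℝ => z i)
      (ContinuousLinearMap.proj i : (Fin 3 → ℝ) →L[ℝ] ℝ) y :=
  hasFDerivAt_apply i y

lemma hE (y : Fin 3 → ℝ) :
    HasFDerivAt (fun z : Fin 3 → ℝ => exp (-(z 0)))
      (exp (-(y 0)) • (-(ContinuousLinearMap.proj 0 : (Fin 3 → ℝ) →L[ℝ] ℝ))) y :=
  ((hproj 0 y).neg).exp

lemma jac51 (q v : ℝ) (y : Fin 3 → ℝ) :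
    jacobian (xi51 q v) y =
      !![exp (-(y 0)), 0, 0;
         -(exp (-(y 0)) * y 1), exp (-(y 0)), 0;
         -(q / (2 * v) * exp (-(y 0)) * (y 1) ^ 2), q / v * exp (-(y 0)) * y 1, 1] := by
  have e0 : (fun z => xi51 q v z 0) = fun z : Fin 3 → ℝ => -exp (-(z 0)) := by
    funext z
    simp only [xi51, Matrix.cons_val_zero]
  have e1 : (fun z => xi51 q v z 1) = fun z : Fin 3 → ℝ => exp (-(z 0)) * z 1 := by
    funext z
    simp only [xi51, Matrix.cons_val_one, Matrix.head_cons, Matrix.cons_val_zero]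
  have e2 : (fun z => xi51 q v z 2) =
      fun z : Fin 3 → ℝ => q / (2 * v) * exp (-(z 0)) * (z 1 * z 1) + z 2 := by
    funext z
    simp only [xi51, Matrix.cons_val_two, Matrix.tail_cons, Matrix.head_cons]
    ring
  have h0 : HasFDerivAt (fun z : Fin 3 → ℝ => -exp (-(z 0))) _ y := (hE y).neg
  have h1 : HasFDerivAt (fun z : Fin 3 → ℝ => exp (-(z 0)) * z 1) _ y := (hE y).mul (hproj 1 y)
  have h2 : HasFDerivAt (fun z : Fin 3 → ℝ => q / (2 * v) * exp (-(z 0)) * (z 1 * z 1) + z 2) _ y :=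
    (((hE y).const_mul (q / (2 * v))).mul ((hproj 1 y).mul (hproj 1 y))).add (hproj 2 y)
  rw [Matrix.eta_fin_three (jacobian (xi51 q v) y)]
  simp only [jacobian, Matrix.of_apply, pd, e0, e1, e2, h0.fderiv, h1.fderiv, h2.fderiv]
  ext i j
  fin_cases i <;> fin_cases j <;>
    · simp only [ContinuousLinearMap.add_apply, ContinuousLinearMap.smul_apply,
        ContinuousLinearMap.neg_apply, ContinuousLinearMap.proj_apply,
        Pi.single_apply, Matrix.cons_val', Matrix.cons_val_zero, Matrix.cons_val_one,
        Matrix.head_cons, Matrix.cons_val_two, Matrix.tail_cons, Matrix.empty_val',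
        Matrix.cons_val_fin_one, Matrix.head_fin_const, smul_eq_mul]
      simp
      try ring

theorem stmt_2 (q v : ℝ) (hq : q ≠ 0) (hv : v ≠ 0) (y : Fin 3 → ℝ) :
    (jacobian (xi51 q v) y)ᵀ * Gconst q v * jacobian (xi51 q v) y = G51 q v y := by
  have hexp : exp (-2 * y 0) = exp (-(y 0)) * exp (-(y 0)) := by
    rw [← Real.exp_add]; ring_nf
  rw [jac51]
  have ht : (!![exp (-(y 0)), 0, 0;
         -(exp (-(y 0)) * y 1), exp (-(y 0)), 0;
         -(q / (2 * v) * exp (-(y 0)) * (y 1) ^ 2), q / v * exp (-(y 0)) * y 1, 1])ᵀ =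
      !![exp (-(y 0)), -(exp (-(y 0)) * y 1), -(q / (2 * v) * exp (-(y 0)) * (y 1) ^ 2);
         0, exp (-(y 0)), q / v * exp (-(y 0)) * y 1;
         0, 0, 1] := by
    ext i j; fin_cases i <;> fin_cases j <;> rfl
  rw [ht, Gconst, Matrix.mul_fin_three, Matrix.mul_fin_three, G51, hexp]
  ext i j
  fin_cases i <;> fin_cases j <;>
    · simp only [Matrix.cons_val', Matrix.cons_val_zero, Matrix.cons_val_one,
        Matrix.head_cons, Matrix.cons_val_two, Matrix.tail_cons, Matrix.empty_val',
        Matrix.cons_val_fin_one, Matrix.head_fin_const, Matrix.of_apply, Fin.zero_eta,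
        Fin.mk_one, Fin.reduceFinMk, Matrix.cons_val]
      field_simp
      try ring
end
end
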